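/- Lemma on lifting along duplicated points: Let X be a finite set, a ≠ b in X, X' = X \ {b}. For s a partial order on X', define s_{a∼b} as s extended to X by making b behave exactly like a (b related to c iff a is, with a,b incomparable), and s_{a<b}, s_{a>b} by further adding (a,b) resp. (b,a). Then for any weak total order r on X: (i) if a <_r b then r is compatible with s_{a∼b} iff r is compatible with s_{a<b}, and r is incompatible with s_{a>b}; (ii) symmetrically if b <_r a; (iii) if a and b are incomparable in r, then compatibility with s_{a∼b}, s_{a<b}, s_{a>b} are all equivalent. -/

import Mathlib

/-- Two relations are compatible when the transitive closure of their union is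
antisymmetric (i.e. the union is acyclic). -/
def Compatible {X : Type*} (r s : X → X → Prop) : Prop :=
  ∀ a b : X, Relation.TransGen (fun u v => r u v ∨ s u v) a b →
    Relation.TransGen (fun u v => r u v ∨ s u v) b a → a = b

/-- `s_{a∼b}`: the order `s` (on `X \ {b}`) extended to `X` by making the new point `b`
behave exactly like `a`, with `a` and `b` incomparable. -/
def extEquiv {X : Type*} (s : X → X → Prop) (a b : X) : X → X → Prop :=
  fun x y => s x y ∨ (y = b ∧ s x a ∧ x ≠ a ∧ x ≠ b) ∨ (x = b ∧ s a y ∧ y ≠ a ∧ y ≠ b)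

/-- `s_{a<b} = s_{a∼b} ∪ {(a,b)}`. -/
def extLt {X : Type*} (s : X → X → Prop) (a b : X) : X → X → Prop :=
  fun x y => extEquiv s a b x y ∨ (x = a ∧ y = b)

/-- `s_{a>b} = s_{a∼b} ∪ {(b,a)}`. -/
def extGt {X : Type*} (s : X → X → Prop) (a b : X) : X → X → Prop :=
  fun x y => extEquiv s a b x y ∨ (x = b ∧ y = a)

section Aux

open Classical

variable {X : Type*} {a b : X} {s r : X → X → Prop}

private lemma compat_mono {s' : X → X → Prop}
    (h : ∀ u v, s u v → s' u v) (hc : Compatible r s') : Compatible r s := fun u v h1 h2 =>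
  hc u v (Relation.TransGen.mono (fun x y => Or.imp_right (h x y)) _ _ h1) (Relation.TransGen.mono (fun x y => Or.imp_right (h x y)) _ _ h2)

private lemma rtg_to_tg {R : X → X → Prop} {x y : X}
    (h : Relation.ReflTransGen R x y) (hne : x ≠ y) : Relation.TransGen R x y := by
  rcases h.cases_head with rfl | ⟨c, hc, hcb⟩
  · exact absurd rfl hne
  · exact Relation.TransGen.head' hc hcb

private lemma exit_lemma {R : X → X → Prop} {c : X} :
    ∀ {y : X}, Relation.TransGen R c y →
      y = c ∨ ∃ w, w ≠ c ∧ R c w ∧ Relation.ReflTransGen R w y := by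
  intro y h
  induction h with
  | @single d h =>
      by_cases hd : d = c
      · exact Or.inl hd
      · exact Or.inr ⟨d, hd, h, Relation.ReflTransGen.refl⟩
  | @tail p q h1 h2 ih =>
      rcases ih with hpc | ⟨w, hw, hcw, hwp⟩
      · rw [hpc] at h2
        by_cases hq : q = c
        · exact Or.inl hq
        · exact Or.inr ⟨q, hq, h2, Relation.ReflTransGen.refl⟩
      · exact Or.inr ⟨w, hw, hcw, hwp.tail h2⟩

/-- Projection of a single edge along `π : b ↦ a`. -/
private lemma proj_edge (hab : a ≠ b)
    (hbiso : ∀ x : X, (s x b → x = b) ∧ (s b x → x = b))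
    (hweak : ∀ x y z : X, (r x y ∧ x ≠ y) → (r x z ∧ x ≠ z) ∨ (r z y ∧ z ≠ y))
    (hnab : ¬ r a b) (hnba : ¬ r b a) {x y : X}
    (h : r x y ∨ extEquiv s a b x y ∨ (x = a ∧ y = b) ∨ (x = b ∧ y = a)) :
    Relation.ReflTransGen (fun u v => r u v ∨ extEquiv s a b u v)
      (if x = b then a else x) (if y = b then a else y) := by
  rcases h with h | h | ⟨hxa, hyb⟩ | ⟨hxb, hya⟩
  · by_cases hx : x = b
    · by_cases hy : y = b
      · rw [if_pos hx, if_pos hy]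
      · rw [if_pos hx, if_neg hy]
        rw [hx] at h
        rcases hweak b y a ⟨h, fun e => hy e.symm⟩ with ⟨hba, _⟩ | ⟨hay, _⟩
        · exact absurd hba hnba
        · exact Relation.ReflTransGen.single (Or.inl hay)
    · by_cases hy : y = b
      · rw [if_neg hx, if_pos hy]
        rw [hy] at h
        rcases hweak x b a ⟨h, hx⟩ with ⟨hxa, _⟩ | ⟨hab', _⟩
        · exact Relation.ReflTransGen.single (Or.inl hxa)
        · exact absurd hab' hnab
      · rw [if_neg hx, if_neg hy]
        exact Relation.ReflTransGen.single (Or.inl h)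
  · rcases h with h | ⟨hyb, hsxa, _, hxb⟩ | ⟨hxb, hsay, _, hyb⟩
    · by_cases hx : x = b
      · rw [hx] at h
        have hy : y = b := (hbiso y).2 h
        rw [if_pos hx, if_pos hy]
      · by_cases hy : y = b
        · rw [hy] at h
          exact absurd ((hbiso x).1 h) hx
        · rw [if_neg hx, if_neg hy]
          exact Relation.ReflTransGen.single (Or.inr (Or.inl h))
    · rw [if_neg hxb, if_pos hyb]
      exact Relation.ReflTransGen.single (Or.inr (Or.inl hsxa))
    · rw [if_pos hxb, if_neg hyb]
      exact Relation.ReflTransGen.single (Or.inr (Or.inl hsay))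
  · rw [hxa, if_neg hab, if_pos hyb]
  · rw [if_pos hxb, hya, if_neg hab]

/-- Projection of a transitive chain along `π : b ↦ a`. -/
private lemma proj_tg (hab : a ≠ b)
    (hbiso : ∀ x : X, (s x b → x = b) ∧ (s b x → x = b))
    (hweak : ∀ x y z : X, (r x y ∧ x ≠ y) → (r x z ∧ x ≠ z) ∨ (r z y ∧ z ≠ y))
    (hnab : ¬ r a b) (hnba : ¬ r b a) {T' : X → X → Prop}
    (hT' : ∀ u v, T' u v → r u v ∨ extEquiv s a b u v ∨ (u = a ∧ v = b) ∨ (u = b ∧ v = a))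
    {x y : X} (h : Relation.TransGen T' x y) :
    Relation.ReflTransGen (fun u v => r u v ∨ extEquiv s a b u v)
      (if x = b then a else x) (if y = b then a else y) := by
  induction h with
  | @single d h => exact proj_edge hab hbiso hweak hnab hnba (hT' _ _ h)
  | @tail p q h1 h2 ih => exact ih.trans (proj_edge hab hbiso hweak hnab hnba (hT' _ _ h2))

private lemma edges_lt :
    ∀ u v : X, (r u v ∨ extLt s a b u v) →
      r u v ∨ extEquiv s a b u v ∨ (u = a ∧ v = b) ∨ (u = b ∧ v = a) := by
  intro u v h
  rcases h with h | h
  · exact Or.inl h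
  · rcases h with h | h
    · exact Or.inr (Or.inl h)
    · exact Or.inr (Or.inr (Or.inl h))

private lemma edges_gt :
    ∀ u v : X, (r u v ∨ extGt s a b u v) →
      r u v ∨ extEquiv s a b u v ∨ (u = a ∧ v = b) ∨ (u = b ∧ v = a) := by
  intro u v h
  rcases h with h | h
  · exact Or.inl h
  · rcases h with h | h
    · exact Or.inr (Or.inl h)
    · exact Or.inr (Or.inr (Or.inr h))

/-- In the incomparable case, there is no chain from `b` to `a` in `r ∪ s_{a<b}`. -/
private lemma no_ba_lt (hab : a ≠ b)
    (hbiso : ∀ x : X, (s x b → x = b) ∧ (s b x → x = b))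
    (hweak : ∀ x y z : X, (r x y ∧ x ≠ y) → (r x z ∧ x ≠ z) ∨ (r z y ∧ z ≠ y))
    (hnab : ¬ r a b) (hnba : ¬ r b a)
    (hC : Compatible r (extEquiv s a b)) :
    ¬ Relation.TransGen (fun u v => r u v ∨ extLt s a b u v) b a := by
  intro h
  rcases exit_lemma h with hba | ⟨w, hwb, hbw, hwa⟩
  · exact hab hba
  · simp only [extLt, extEquiv] at hbw
    have key : (r a w ∨ extEquiv s a b a w) ∧ w ≠ a := by
      rcases hbw with h' | (h' | ⟨hwb2, _⟩ | ⟨_, hsaw, hwa', _⟩) | ⟨hba2, _⟩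
      · have hwa' : w ≠ a := fun e => hnba (e ▸ h')
        rcases hweak b w a ⟨h', fun e => hwb e.symm⟩ with ⟨hba', _⟩ | ⟨haw, _⟩
        · exact absurd hba' hnba
        · exact ⟨Or.inl haw, hwa'⟩
      · exact absurd ((hbiso w).2 h') hwb
      · exact absurd hwb2 hwb
      · exact ⟨Or.inr (Or.inl hsaw), hwa'⟩
      · exact absurd hba2.symm hab
    have hwa2 : Relation.TransGen (fun u v => r u v ∨ extLt s a b u v) w a :=
      rtg_to_tg hwa key.2
    have hproj := proj_tg hab hbiso hweak hnab hnba edges_lt hwa2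
    rw [if_neg hwb, if_neg hab] at hproj
    exact key.2.symm (hC a w (Relation.TransGen.single key.1) (rtg_to_tg hproj key.2))

/-- In the incomparable case, there is no chain from `a` to `b` in `r ∪ s_{a>b}`. -/
private lemma no_ab_gt (hab : a ≠ b)
    (hbiso : ∀ x : X, (s x b → x = b) ∧ (s b x → x = b))
    (hweak : ∀ x y z : X, (r x y ∧ x ≠ y) → (r x z ∧ x ≠ z) ∨ (r z y ∧ z ≠ y))
    (hnab : ¬ r a b) (hnba : ¬ r b a)
    (hC : Compatible r (extEquiv s a b)) :
    ¬ Relation.TransGen (fun u v => r u v ∨ extGt s a b u v) a b := by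
  intro h
  have h' : Relation.TransGen
      (Function.swap (fun u v => r u v ∨ extGt s a b u v)) b a :=
    (Relation.transGen_swap).mpr h
  rcases exit_lemma h' with hba | ⟨w, hwb, hbw, hwa⟩
  · exact hab hba
  · have hwa' : Relation.ReflTransGen (fun u v => r u v ∨ extGt s a b u v) a w :=
      (Relation.reflTransGen_swap).mpr hwa
    simp only [Function.swap, extGt, extEquiv] at hbw
    have key : (r w a ∨ extEquiv s a b w a) ∧ w ≠ a := by
      rcases hbw with h'' | (h'' | ⟨_, hswa, hwa0, _⟩ | ⟨hwb2, _⟩) | ⟨hwb2, _⟩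
      · have hwa0 : w ≠ a := fun e => hnab (e ▸ h'')
        rcases hweak w b a ⟨h'', hwb⟩ with ⟨hwa1, _⟩ | ⟨hab', _⟩
        · exact ⟨Or.inl hwa1, hwa0⟩
        · exact absurd hab' hnab
      · exact absurd ((hbiso w).1 h'') hwb
      · exact ⟨Or.inr (Or.inl hswa), hwa0⟩
      · exact absurd hwb2 hwb
      · exact absurd hwb2 hwb
    have hwa2 : Relation.TransGen (fun u v => r u v ∨ extGt s a b u v) a w :=
      rtg_to_tg hwa' (Ne.symm key.2)
    have hproj := proj_tg hab hbiso hweak hnab hnba edges_gt hwa2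
    rw [if_neg hab, if_neg hwb] at hproj
    exact key.2 (hC w a (Relation.TransGen.single key.1)
      (rtg_to_tg hproj (Ne.symm key.2)))

end Aux

theorem stmt15 {X : Type*} [Finite X] (a b : X) (hab : a ≠ b)
    (s : X → X → Prop) (hs : IsPartialOrder X s)
    (hbiso : ∀ x : X, (s x b → x = b) ∧ (s b x → x = b))
    (r : X → X → Prop) (hr : IsPartialOrder X r)
    (hweak : ∀ x y z : X, (r x y ∧ x ≠ y) → (r x z ∧ x ≠ z) ∨ (r z y ∧ z ≠ y)) :
    ((r a b → ((Compatible r (extEquiv s a b) ↔ Compatible r (extLt s a b)) ∧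
        ¬ Compatible r (extGt s a b))) ∧
     (r b a → ((Compatible r (extEquiv s a b) ↔ Compatible r (extGt s a b)) ∧
        ¬ Compatible r (extLt s a b))) ∧
     ((¬ r a b ∧ ¬ r b a) →
        ((Compatible r (extEquiv s a b) ↔ Compatible r (extLt s a b)) ∧
         (Compatible r (extEquiv s a b) ↔ Compatible r (extGt s a b))))) := by
  have hsubLt : ∀ u v, extEquiv s a b u v → extLt s a b u v := fun u v h => Or.inl h
  have hsubGt : ∀ u v, extEquiv s a b u v → extGt s a b u v := fun u v h => Or.inl h
  refine ⟨?_, ?_, ?_⟩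
  · -- case r a b
    intro hrab
    constructor
    · constructor
      · intro hC u v h1 h2
        have key : ∀ u v : X, (r u v ∨ extLt s a b u v) → (r u v ∨ extEquiv s a b u v) := by
          intro u v h
          rcases h with h | h
          · exact Or.inl h
          · rcases h with h | ⟨hua, hvb⟩
            · exact Or.inr h
            · rw [hua, hvb]
              exact Or.inl hrab
        exact hC u v (Relation.TransGen.mono key _ _ h1) (Relation.TransGen.mono key _ _ h2)
      · exact compat_mono hsubLt
    · intro hC
      exact hab (hC a b (Relation.TransGen.single (Or.inl hrab))
        (Relation.TransGen.single (Or.inr (Or.inr ⟨rfl, rfl⟩))))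
  · -- case r b a
    intro hrba
    constructor
    · constructor
      · intro hC u v h1 h2
        have key : ∀ u v : X, (r u v ∨ extGt s a b u v) → (r u v ∨ extEquiv s a b u v) := by
          intro u v h
          rcases h with h | h
          · exact Or.inl h
          · rcases h with h | ⟨hub, hva⟩
            · exact Or.inr h
            · rw [hub, hva]
              exact Or.inl hrba
        exact hC u v (Relation.TransGen.mono key _ _ h1) (Relation.TransGen.mono key _ _ h2)
      · exact compat_mono hsubGt
    · intro hC
      exact hab (hC a b (Relation.TransGen.single (Or.inr (Or.inr ⟨rfl, rfl⟩)))
        (Relation.TransGen.single (Or.inl hrba)))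
  · -- incomparable case
    rintro ⟨hnab, hnba⟩
    constructor
    · constructor
      · intro hC u v h1 h2
        have p1 := proj_tg hab hbiso hweak hnab hnba edges_lt h1
        have p2 := proj_tg hab hbiso hweak hnab hnba edges_lt h2
        by_cases hub : u = b
        · by_cases hvb : v = b
          · rw [hub, hvb]
          · by_cases hva : v = a
            · rw [hub, hva] at h1
              exact absurd h1 (no_ba_lt hab hbiso hweak hnab hnba hC)
            · rw [if_pos hub, if_neg hvb] at p1 p2
              exact absurd (hC a v (rtg_to_tg p1 fun e => hva e.symm)
                (rtg_to_tg p2 hva)).symm hva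
        · by_cases hvb : v = b
          · by_cases hua : u = a
            · rw [hua, hvb] at h2
              exact absurd h2 (no_ba_lt hab hbiso hweak hnab hnba hC)
            · rw [if_neg hub, if_pos hvb] at p1 p2
              exact absurd (hC u a (rtg_to_tg p1 hua)
                (rtg_to_tg p2 fun e => hua e.symm)) hua
          · rw [if_neg hub, if_neg hvb] at p1 p2
            by_cases huv : u = v
            · exact huv
            · exact hC u v (rtg_to_tg p1 huv) (rtg_to_tg p2 fun e => huv e.symm)
      · exact compat_mono hsubLt
    · constructor
      · intro hC u v h1 h2
        have p1 := proj_tg hab hbiso hweak hnab hnba edges_gt h1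
        have p2 := proj_tg hab hbiso hweak hnab hnba edges_gt h2
        by_cases hub : u = b
        · by_cases hvb : v = b
          · rw [hub, hvb]
          · by_cases hva : v = a
            · rw [hva, hub] at h2
              exact absurd h2 (no_ab_gt hab hbiso hweak hnab hnba hC)
            · rw [if_pos hub, if_neg hvb] at p1 p2
              exact absurd (hC a v (rtg_to_tg p1 fun e => hva e.symm)
                (rtg_to_tg p2 hva)).symm hva
        · by_cases hvb : v = b
          · by_cases hua : u = a
            · rw [hua, hvb] at h1
              exact absurd h1 (no_ab_gt hab hbiso hweak hnab hnba hC)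
            · rw [if_neg hub, if_pos hvb] at p1 p2
              exact absurd (hC u a (rtg_to_tg p1 hua)
                (rtg_to_tg p2 fun e => hua e.symm)) hua
          · rw [if_neg hub, if_neg hvb] at p1 p2
            by_cases huv : u = v
            · exact huv
            · exact hC u v (rtg_to_tg p1 huv) (rtg_to_tg p2 fun e => huv e.symm)
      · exact compat_mono hsubGt
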